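/- The total variation distance d_n(N) between the law of the n-step card simulation and the uniform measure on Ω_n equals the sum over all (λ_1,...,λ_{2d}) with nonnegative integer entries summing to n of [ C(N-n; K-λ_1,...,K-λ_{2d}) C(n; λ_1,...,λ_{2d}) / C(N; K,...,K) − (2d)^{-n} C(n; λ_1,...,λ_{2d}) ]^+, i.e., it coincides with the total variation distance between a multivariate hypergeometric distribution H(N; K,...,K; n) and a multinomial distribution B(n; 1/(2d),...,1/(2d)). -/

import Mathlib

open Finset

/-- Multinomial coefficient with integer arguments, interpreted as `0`
whenever some argument is negative. -/
def mcoef {ℓ : ℕ} (k : Fin ℓ → ℤ) : ℕ :=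
  if ∀ i, 0 ≤ k i then Nat.multinomial Finset.univ (fun i => (k i).toNat) else 0

namespace TVAux

def cnt {n L : ℕ} (ω : Fin n → Fin L) (i : Fin L) : ℕ :=
  (univ.filter fun j => ω j = i).card

lemma cnt_eq_sum {n L : ℕ} (ω : Fin n → Fin L) (i : Fin L) :
    cnt ω i = ∑ j : Fin n, if ω j = i then 1 else 0 := by
  rw [cnt, Finset.card_filter]

lemma sum_cnt {n L : ℕ} (ω : Fin n → Fin L) : ∑ i, cnt ω i = n := by
  simp only [cnt_eq_sum]
  rw [Finset.sum_comm]
  simp [Finset.sum_ite_eq]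

lemma cnt_cons {n L : ℕ} (v : Fin L) (ω : Fin n → Fin L) (i : Fin L) :
    cnt (Fin.cons v ω) i = (if v = i then 1 else 0) + cnt ω i := by
  simp only [cnt_eq_sum, Fin.sum_univ_succ, Fin.cons_succ, Fin.cons_zero]

def Fcard (n L : ℕ) (lam : Fin L → ℕ) : ℕ :=
  (univ.filter fun ω : Fin n → Fin L => cnt ω = lam).card

lemma Fcard_eq_zero {n L : ℕ} {lam : Fin L → ℕ} (h : ∑ i, lam i ≠ n) :
    Fcard n L lam = 0 := by
  rw [Fcard, Finset.card_eq_zero, Finset.filter_eq_empty_iff]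
  intro ω _ hc
  exact h (hc ▸ sum_cnt ω)

lemma cnt_cons_eq_iff {n L : ℕ} (v : Fin L) (ω : Fin n → Fin L) (lam : Fin L → ℕ) :
    cnt (Fin.cons v ω) = lam ↔
      (lam v ≠ 0 ∧ cnt ω = Function.update lam v (lam v - 1)) := by
  rw [funext_iff, funext_iff]
  simp only [cnt_cons, Function.update_apply]
  constructor
  · intro h
    have hv := h v
    rw [if_pos rfl] at hv
    refine ⟨by omega, fun i => ?_⟩
    rcases eq_or_ne i v with rfl | hne
    · rw [if_pos rfl]
      have := h i; rw [if_pos rfl] at this; omega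
    · rw [if_neg hne]
      have := h i; rw [if_neg (Ne.symm hne)] at this; omega
  · rintro ⟨hv, h⟩ i
    have hi := h i
    rcases eq_or_ne i v with rfl | hne
    · rw [if_pos rfl] at hi; rw [if_pos rfl, hi]; omega
    · rw [if_neg hne] at hi; rw [if_neg (Ne.symm hne), hi]; omega

lemma Fcard_succ {n L : ℕ} (lam : Fin L → ℕ) :
    Fcard (n+1) L lam
      = ∑ v : Fin L, (univ.filter fun ω : Fin n → Fin L =>
          cnt (Fin.cons v ω) = lam).card := by
  simp only [Fcard, Finset.card_filter]
  rw [← Fintype.sum_equiv (Fin.consEquiv fun _ : Fin (n+1) => Fin L)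
    (fun p => if cnt (Fin.consEquiv (fun _ => Fin L) p) = lam then 1 else 0)
    (fun ω => if cnt ω = lam then 1 else 0) (fun p => rfl)]
  rw [Fintype.sum_prod_type]
  rfl

lemma Fcard_mul_factorial {L : ℕ} : ∀ (n : ℕ) (lam : Fin L → ℕ), ∑ i, lam i = n →
    Fcard n L lam * ∏ i, Nat.factorial (lam i) = Nat.factorial n := by
  intro n
  induction n with
  | zero =>
    intro lam h
    have hlam : lam = fun _ => 0 := funext fun i =>
      Finset.sum_eq_zero_iff.1 h i (mem_univ i)
    subst hlam
    simp only [Nat.factorial_zero, Finset.prod_const_one, mul_one, Fcard]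
    rw [Finset.filter_true_of_mem, Finset.card_univ]
    · simp
    · intro ω _
      funext i
      rw [cnt]
      rw [Finset.card_eq_zero, Finset.eq_empty_iff_forall_notMem]
      intro j _; exact j.elim0
  | succ n ih =>
    intro lam hsum
    rw [Fcard_succ, Finset.sum_mul]
    have key : ∀ v : Fin L,
        (univ.filter fun ω : Fin n → Fin L => cnt (Fin.cons v ω) = lam).card
          * ∏ i, Nat.factorial (lam i) = lam v * Nat.factorial n := by
      intro v
      rcases Nat.eq_zero_or_pos (lam v) with hv | hv
      · rw [hv, Finset.filter_eq_empty_iff.2, Finset.card_empty, zero_mul, zero_mul]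
        intro ω _ hc
        exact ((cnt_cons_eq_iff v ω lam).1 hc).1 hv
      · set lam' := Function.update lam v (lam v - 1) with hlam'
        have hfe : (univ.filter fun ω : Fin n → Fin L => cnt (Fin.cons v ω) = lam)
            = univ.filter fun ω : Fin n → Fin L => cnt ω = lam' := by
          apply Finset.filter_congr
          intro ω _
          rw [cnt_cons_eq_iff]
          simp [Nat.pos_iff_ne_zero.1 hv, hlam']
        have hprod : ∏ i, Nat.factorial (lam i)
            = lam v * ∏ i, Nat.factorial (lam' i) := by
          rw [hlam']
          simp only [Function.apply_update (fun _ m => Nat.factorial m) lam v (lam v - 1)]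
          rw [Finset.prod_update_of_mem (mem_univ v), Finset.sdiff_singleton_eq_erase,
            ← Finset.mul_prod_erase univ (fun i => Nat.factorial (lam i)) (mem_univ v),
            ← mul_assoc]
          congr 1
          have h1 : lam v = lam v - 1 + 1 := by omega
          conv_lhs => rw [h1, Nat.factorial_succ, ← h1]
        have hsum' : ∑ i, lam' i = n := by
          rw [hlam', Finset.sum_update_of_mem (mem_univ v), Finset.sdiff_singleton_eq_erase]
          have := Finset.add_sum_erase univ lam (mem_univ v)
          omega
        have hih := ih lam' hsum'
        rw [hfe, hprod, mul_comm (lam v), ← mul_assoc]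
        rw [Fcard] at hih
        rw [hih]
        exact Nat.mul_comm _ _
    rw [Finset.sum_congr rfl fun v _ => key v, ← Finset.sum_mul, hsum,
      Nat.factorial_succ]

lemma Fcard_eq_multinomial {n L : ℕ} {lam : Fin L → ℕ} (h : ∑ i, lam i = n) :
    Fcard n L lam = Nat.multinomial univ lam := by
  have h1 := Fcard_mul_factorial n lam h
  have h2 := Nat.multinomial_spec univ lam
  rw [h] at h2
  have hpos : 0 < ∏ i, Nat.factorial (lam i) := Finset.prod_pos fun i _ => Nat.factorial_pos _
  apply Nat.eq_of_mul_eq_mul_right hpos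
  rw [h1, mul_comm (Nat.multinomial univ lam), h2]


section Emb
variable {n M L : ℕ} (label : Fin M → Fin L) (ω : Fin n → Fin L)

/-- Splitting a colored injection into per-color injections. -/
def splitEquiv :
    {f : Fin n ↪ Fin M // ∀ j, label (f j) = ω j}
      ≃ ∀ i : Fin L, ({j : Fin n // ω j = i} ↪ {c : Fin M // label c = i}) where
  toFun f i :=
    ⟨fun j => ⟨f.1 j.1, by rw [f.2 j.1, j.2]⟩,
      fun a b h => Subtype.ext (f.1.injective (congrArg Subtype.val h))⟩
  invFun F :=
    ⟨⟨fun j => (F (ω j) ⟨j, rfl⟩).1, by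
      intro a b h
      dsimp only at h
      have key : ∀ (i : Fin L) (x : {j : Fin n // ω j = i}),
          (F i x).1 = (F (ω x.1) ⟨x.1, rfl⟩).1 := by
        rintro i ⟨j, rfl⟩; rfl
      have hab : ω a = ω b := by
        rw [← (F (ω a) ⟨a, rfl⟩).2, ← (F (ω b) ⟨b, rfl⟩).2, h]
      have h2 : (F (ω a) (⟨a, rfl⟩ : {j // ω j = ω a})).1
          = (F (ω a) (⟨b, hab.symm⟩ : {j // ω j = ω a})).1 := by
        rw [key (ω a) ⟨b, hab.symm⟩]
        exact h
      have := (F (ω a)).injective (Subtype.ext h2)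
      exact congrArg Subtype.val this⟩,
      fun j => (F (ω j) ⟨j, rfl⟩).2⟩
  left_inv f := Subtype.ext (Function.Embedding.ext fun j => rfl)
  right_inv F := by
    funext i
    refine Function.Embedding.ext fun x => Subtype.ext ?_
    obtain ⟨j, rfl⟩ := x
    rfl

lemma card_colored_emb (K : ℕ)
    (hfib : ∀ i, (univ.filter fun c : Fin M => label c = i).card = K) :
    Fintype.card {f : Fin n ↪ Fin M // ∀ j, label (f j) = ω j}
      = ∏ i, Nat.descFactorial K (cnt ω i) := by
  rw [Fintype.card_congr (splitEquiv label ω), Fintype.card_pi]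
  refine Finset.prod_congr rfl fun i _ => ?_
  rw [Fintype.card_embedding_eq, Fintype.card_subtype, Fintype.card_subtype, hfib i, cnt]

end Emb

section Perm
open Equiv

variable {n M : ℕ}

lemma exists_perm_extend (hn : n ≤ M) (f : Fin n ↪ Fin M) :
    ∃ τ : Equiv.Perm (Fin M), ∀ j : Fin n, τ (Fin.castLE hn j) = f j := by
  classical
  set c₀ : Fin n ↪ Fin M := ⟨Fin.castLE hn, Fin.castLE_injective hn⟩ with hc₀
  have hcard : Fintype.card ((Set.range ⇑c₀)ᶜ : Set (Fin M))
      = Fintype.card ((Set.range ⇑f)ᶜ : Set (Fin M)) := by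
    rw [Fintype.card_compl_set, Fintype.card_compl_set,
      Set.card_range_of_injective c₀.injective, Set.card_range_of_injective f.injective]
  refine ⟨((Equiv.Set.sumCompl (Set.range ⇑c₀)).symm.trans
      (((c₀.toEquivRange.symm.trans f.toEquivRange)).sumCongr
        (Fintype.equivOfCardEq hcard))).trans
      (Equiv.Set.sumCompl (Set.range ⇑f)), fun j => ?_⟩
  have h1 : (Fin.castLE hn j : Fin M) = c₀ j := rfl
  rw [h1]
  simp only [Equiv.trans_apply]
  rw [Set.sumCompl_symm_apply_of_mem (Set.mem_range_self j)]
  simp [Function.Embedding.toEquivRange_symm_apply_self,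
    Function.Embedding.toEquivRange_apply]

lemma card_perm_fix (hn : n ≤ M) :
    (univ.filter fun σ : Equiv.Perm (Fin M) =>
        ∀ j : Fin n, σ (Fin.castLE hn j) = Fin.castLE hn j).card
      = Nat.factorial (M - n) := by
  classical
  rw [← Fintype.card_subtype]
  have e1 : {σ : Equiv.Perm (Fin M) // ∀ j : Fin n, σ (Fin.castLE hn j) = Fin.castLE hn j}
      ≃ {σ : Equiv.Perm (Fin M) // ∀ a : Fin M, ¬ (n ≤ (a : ℕ)) → σ a = a} := by
    apply Equiv.subtypeEquivRight
    intro σ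
    constructor
    · intro h a ha
      have hlt : (a : ℕ) < n := by omega
      have : Fin.castLE hn ⟨(a : ℕ), hlt⟩ = a := by
        apply Fin.ext; rfl
      rw [← this]; rw [h ⟨(a : ℕ), hlt⟩]
    · intro h j
      exact h (Fin.castLE hn j) (by simp only [Fin.coe_castLE]; exact Nat.not_le.2 j.isLt)
  have e2 := (Equiv.Perm.subtypeEquivSubtypePerm (fun a : Fin M => n ≤ (a : ℕ))).symm
  rw [Fintype.card_congr (e1.trans e2), Fintype.card_perm]
  congr 1
  have e3 : {a : Fin M // n ≤ (a : ℕ)} ≃ {a : Fin M // ¬ ((a : ℕ) < n)} :=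
    Equiv.subtypeEquivRight fun a => by omega
  rw [Fintype.card_congr e3, Fintype.card_subtype_compl]
  have e5 : {a : Fin M // (a : ℕ) < n} ≃ Fin n :=
    ⟨fun x => ⟨(x.1 : ℕ), x.2⟩, fun j => ⟨Fin.castLE hn j, j.isLt⟩,
      fun x => Subtype.ext (Fin.ext rfl), fun j => Fin.ext rfl⟩
  rw [Fintype.card_congr e5, Fintype.card_fin]
  simp

lemma card_perm_fiber (hn : n ≤ M) (f : Fin n ↪ Fin M) :
    (univ.filter fun σ : Equiv.Perm (Fin M) =>
        ∀ j : Fin n, σ (Fin.castLE hn j) = f j).card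
      = Nat.factorial (M - n) := by
  classical
  obtain ⟨τ, hτ⟩ := exists_perm_extend hn f
  rw [← card_perm_fix hn]
  apply Finset.card_nbij' (fun σ => τ⁻¹ * σ) (fun σ => τ * σ)
  · intro σ hσ
    simp only [mem_coe, mem_filter, mem_univ, true_and] at hσ ⊢
    intro j
    rw [Equiv.Perm.mul_apply, hσ j, ← hτ j]
    exact Equiv.symm_apply_apply τ _
  · intro σ hσ
    simp only [mem_coe, mem_filter, mem_univ, true_and] at hσ ⊢
    intro j
    rw [Equiv.Perm.mul_apply, hσ j, hτ j]
  · intro σ _; simp [← mul_assoc]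
  · intro σ _; simp [← mul_assoc]

lemma card_perm_label {L : ℕ} (hn : n ≤ M) (label : Fin M → Fin L)
    (ω : Fin n → Fin L) (K : ℕ)
    (hfib : ∀ i, (univ.filter fun c : Fin M => label c = i).card = K) :
    (univ.filter fun σ : Equiv.Perm (Fin M) =>
        ∀ j : Fin n, label (σ (Fin.castLE hn j)) = ω j).card
      = Nat.factorial (M - n) * ∏ i, Nat.descFactorial K (cnt ω i) := by
  classical
  set t : Finset (Fin n ↪ Fin M) :=
    univ.filter fun f : Fin n ↪ Fin M => ∀ j, label (f j) = ω j with ht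
  have hmaps : ∀ σ : Equiv.Perm (Fin M),
      σ ∈ (univ.filter fun σ : Equiv.Perm (Fin M) =>
        ∀ j : Fin n, label (σ (Fin.castLE hn j)) = ω j) →
      (⟨fun j => σ (Fin.castLE hn j),
        σ.injective.comp (Fin.castLE_injective hn)⟩ : Fin n ↪ Fin M) ∈ t := by
    intro σ hσ
    simp only [mem_filter, mem_univ, true_and, ht] at hσ ⊢
    exact hσ
  rw [Finset.card_eq_sum_card_fiberwise hmaps]
  have hfiber : ∀ f ∈ t,
      ((univ.filter fun σ : Equiv.Perm (Fin M) =>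
          ∀ j : Fin n, label (σ (Fin.castLE hn j)) = ω j).filter
        (fun σ => (⟨fun j => σ (Fin.castLE hn j),
          σ.injective.comp (Fin.castLE_injective hn)⟩ : Fin n ↪ Fin M) = f)).card
      = Nat.factorial (M - n) := by
    intro f hf
    simp only [ht, mem_filter, mem_univ, true_and] at hf
    rw [Finset.filter_filter]
    rw [← card_perm_fiber hn f]
    congr 1
    apply Finset.filter_congr
    intro σ _
    constructor
    · rintro ⟨_, h2⟩ j
      rw [← h2]; rfl
    · intro h
      refine ⟨fun j => by rw [h j]; exact hf j, ?_⟩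
      apply Function.Embedding.ext
      intro j
      exact h j
  rw [Finset.sum_congr rfl hfiber, Finset.sum_const, smul_eq_mul, mul_comm]
  congr 1
  rw [ht, ← Fintype.card_subtype, card_colored_emb label ω K hfib]

end Perm

lemma card_label_fiber {L K : ℕ} (hL : 0 < L) (i : Fin L) :
    (univ.filter fun c : Fin (L*K) => ((c : ℕ) + 1) % L = (i : ℕ)).card = K := by
  set r := ((i : ℕ) + L - 1) % L with hr
  have hrL : r < L := Nat.mod_lt _ hL
  have hmem : ∀ q, q ∈ Finset.range K → q * L + r < L * K := by
    intro q hq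
    have hqK : q < K := Finset.mem_range.1 hq
    have h1 : q * L + r < (q+1) * L := by rw [Nat.succ_mul]; omega
    have h2 : (q+1) * L ≤ K * L := Nat.mul_le_mul_right L hqK
    have h3 : K * L = L * K := Nat.mul_comm K L
    omega
  have hcr : ∀ c : Fin (L*K), ((c : ℕ) + 1) % L = (i : ℕ) → (c : ℕ) % L = r := by
    intro c hc
    set m := (c : ℕ) % L with hm
    have hmL : m < L := Nat.mod_lt _ hL
    have h7 : ((c : ℕ) + 1) % L = (m + 1) % L := by
      rw [hm, Nat.mod_add_mod]
    rcases Nat.lt_or_ge (m+1) L with hl | hg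
    · have h8 : (i : ℕ) = m + 1 := by rw [← hc, h7, Nat.mod_eq_of_lt hl]
      have h9 : (i : ℕ) + L - 1 = m + L := by omega
      rw [hr, h9, Nat.add_mod_right, Nat.mod_eq_of_lt hmL]
    · have hm1 : m + 1 = L := by omega
      have h8 : (i : ℕ) = 0 := by
        rw [← hc, h7, hm1, Nat.mod_self]
      have h9 : (i : ℕ) + L - 1 = L - 1 := by omega
      rw [hr, h9, Nat.mod_eq_of_lt (by omega)]
      omega
  have key : (univ.filter fun c : Fin (L*K) => ((c : ℕ) + 1) % L = (i : ℕ)).card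
      = (Finset.range K).card := by
    refine Finset.card_bij' (fun c _ => (c : ℕ) / L)
      (fun q hq => (⟨q * L + r, hmem q hq⟩ : Fin (L*K))) ?_ ?_ ?_ ?_
    · intro c hc
      rw [Finset.mem_range]
      have := c.isLt
      have h3 : K * L = L * K := Nat.mul_comm K L
      rw [Nat.div_lt_iff_lt_mul hL]
      omega
    · intro q hq
      simp only [Finset.mem_filter, Finset.mem_univ, true_and]
      have h4 : (q * L + r + 1) % L = (r + 1) % L := by
        rw [show q * L + r + 1 = r + 1 + q * L by ring, Nat.add_mul_mod_self_right]
      show (q * L + r + 1) % L = (i : ℕ)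
      rw [h4, hr, Nat.mod_add_mod]
      have h5 : (i : ℕ) + L - 1 + 1 = (i : ℕ) + L := by omega
      rw [h5, Nat.add_mod_right, Nat.mod_eq_of_lt i.isLt]
    · intro c hc
      simp only [Finset.mem_filter, Finset.mem_univ, true_and] at hc
      apply Fin.ext
      have h5 := Nat.div_add_mod (c : ℕ) L
      have h6 : L * ((c : ℕ) / L) = ((c : ℕ) / L) * L := Nat.mul_comm _ _
      have := hcr c hc
      simp only []
      omega
    · intro q hq
      show (q * L + r) / L = q
      rw [show q * L + r = r + L * q by ring, Nat.add_mul_div_left _ _ hL,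
        Nat.div_eq_of_lt hrL]
      omega
  rw [key, Finset.card_range]

lemma key_nat {L K n : ℕ} (lam : Fin L → ℕ) (hle : ∀ i, lam i ≤ K)
    (hsum : ∑ i, lam i = n) :
    (Nat.factorial (L*K - n) * ∏ i, Nat.descFactorial K (lam i))
      * Nat.multinomial univ (fun _ : Fin L => K)
    = Nat.factorial (L*K) * Nat.multinomial univ (fun i => K - lam i) := by
  have hsK : ∑ _i : Fin L, K = L * K := by
    rw [Finset.sum_const, Finset.card_univ, Fintype.card_fin, smul_eq_mul]
  have hsub : ∑ i, (K - lam i) = L * K - n := by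
    have h1 : ∑ i, (K - lam i) + ∑ i, lam i = ∑ _i : Fin L, K := by
      rw [← Finset.sum_add_distrib]
      exact Finset.sum_congr rfl fun i _ => by have := hle i; omega
    have h2 : n ≤ L * K := by
      rw [← hsK, ← hsum]
      exact Finset.sum_le_sum fun i _ => hle i
    omega
  have e1 : (∏ i, Nat.descFactorial K (lam i)) * (∏ i, Nat.factorial (K - lam i))
      = ∏ _i : Fin L, Nat.factorial K := by
    rw [← Finset.prod_mul_distrib]
    exact Finset.prod_congr rfl fun i _ => by
      rw [Nat.mul_comm, Nat.factorial_mul_descFactorial (hle i)]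
  have e2 : (∏ _i : Fin L, Nat.factorial K) * Nat.multinomial univ (fun _ : Fin L => K)
      = Nat.factorial (L*K) := by
    have := Nat.multinomial_spec univ (fun _ : Fin L => K)
    rwa [hsK] at this
  have e3 : (∏ i, Nat.factorial (K - lam i)) * Nat.multinomial univ (fun i => K - lam i)
      = Nat.factorial (L*K - n) := by
    have := Nat.multinomial_spec univ (fun i => K - lam i)
    rwa [hsub] at this
  apply Nat.eq_of_mul_eq_mul_right
    (show 0 < ∏ i, Nat.factorial (K - lam i) from
      Finset.prod_pos fun i _ => Nat.factorial_pos _)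
  calc (Nat.factorial (L*K - n) * ∏ i, Nat.descFactorial K (lam i))
        * Nat.multinomial univ (fun _ : Fin L => K) * ∏ i, Nat.factorial (K - lam i)
      = Nat.factorial (L*K - n) *
          ((∏ i, Nat.descFactorial K (lam i)) * ∏ i, Nat.factorial (K - lam i))
          * Nat.multinomial univ (fun _ : Fin L => K) := by ring
    _ = Nat.factorial (L*K - n) * (∏ _i : Fin L, Nat.factorial K)
          * Nat.multinomial univ (fun _ : Fin L => K) := by rw [e1]
    _ = Nat.factorial (L*K - n) * ((∏ _i : Fin L, Nat.factorial K)
          * Nat.multinomial univ (fun _ : Fin L => K)) := by ring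
    _ = Nat.factorial (L*K - n) * Nat.factorial (L*K) := by rw [e2]
    _ = Nat.factorial (L*K) *
          ((∏ i, Nat.factorial (K - lam i)) * Nat.multinomial univ (fun i => K - lam i)) := by
        rw [e3]; ring
    _ = Nat.factorial (L*K) * Nat.multinomial univ (fun i => K - lam i)
          * ∏ i, Nat.factorial (K - lam i) := by ring

lemma key_real {L K n : ℕ} (u : ℝ) (hu : 0 ≤ u) (lam : Fin L → ℕ)
    (hsum : ∑ i, lam i = n) :
    (Nat.multinomial univ lam : ℝ) *
      max (((Nat.factorial (L*K - n) * ∏ i, Nat.descFactorial K (lam i) : ℕ) : ℝ)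
          / (Nat.factorial (L*K) : ℝ) - u) 0
    = max ((mcoef (fun i => (K : ℤ) - (lam i : ℤ)) : ℝ)
          * (Nat.multinomial univ lam : ℝ)
          / (Nat.multinomial univ (fun _ : Fin L => K) : ℝ)
        - u * (Nat.multinomial univ lam : ℝ)) 0 := by
  set c : ℝ := (Nat.multinomial univ lam : ℝ) with hcdef
  have hc : (0:ℝ) ≤ c := Nat.cast_nonneg _
  rw [mul_max_of_nonneg _ _ hc, mul_zero]
  by_cases hle : ∀ i, lam i ≤ K
  · have hm : mcoef (fun i => (K : ℤ) - (lam i : ℤ))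
        = Nat.multinomial univ (fun i => K - lam i) := by
      rw [mcoef, if_pos (fun i => by have := hle i; omega)]
      congr 1
      funext i
      have := hle i
      omega
    rw [hm]
    have hkey := key_nat lam hle hsum
    have hD : ((Nat.factorial (L*K - n) * ∏ i, Nat.descFactorial K (lam i) : ℕ) : ℝ)
        / (Nat.factorial (L*K) : ℝ)
        = (Nat.multinomial univ (fun i => K - lam i) : ℝ)
          / (Nat.multinomial univ (fun _ : Fin L => K) : ℝ) := by
      rw [div_eq_div_iff (by positivity)
        (Nat.cast_ne_zero.2 (Nat.multinomial_pos univ (fun _ : Fin L => K)).ne')]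
      exact_mod_cast hkey.trans (Nat.mul_comm _ _)
    congr 1
    rw [mul_sub, hD, mul_comm c u]
    congr 1
    ring
  · push_neg at hle
    obtain ⟨i0, hi0⟩ := hle
    have h0 : (∏ i, Nat.descFactorial K (lam i)) = 0 :=
      Finset.prod_eq_zero (mem_univ i0) (Nat.descFactorial_eq_zero_iff_lt.2 hi0)
    have hm : mcoef (fun i => (K : ℤ) - (lam i : ℤ)) = 0 := by
      rw [mcoef, if_neg]
      push_neg
      exact ⟨i0, by omega⟩
    rw [h0, hm]
    have h1 : c * (((Nat.factorial (L*K - n) * 0 : ℕ) : ℝ) / (Nat.factorial (L*K) : ℝ) - u)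
        = -(c * u) := by
      push_cast
      ring
    rw [h1]
    have h2 : ((0:ℕ) : ℝ) * c / (Nat.multinomial univ (fun _ : Fin L => K) : ℝ)
        - u * c = -(u * c) := by
      push_cast
      ring
    rw [h2]
    rw [max_eq_right (by nlinarith), max_eq_right (by nlinarith)]

end TVAux


open TVAux in
/-- The total variation distance `d_n(N)` between the law of the `n`-step card
simulation (uniform permutation of `N = 2dK` cards) and the uniform measure on
`Ω_n = {0,…,2d-1}^n` equals the multivariate hypergeometric/multinomial sum. -/
theorem tv_distance_formula (d K n : ℕ) (hd : 0 < d) (hn : n < 2*d*K) :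
    ∑ ω : Fin n → Fin (2*d),
      max
        (((Finset.univ.filter (fun σ : Equiv.Perm (Fin (2*d*K)) =>
              ∀ j : Fin n, (((σ (Fin.castLE hn.le j) : ℕ) + 1) % (2*d)) = (ω j : ℕ))).card : ℝ)
              / (Nat.factorial (2*d*K))
          - ((2*d : ℝ))⁻¹ ^ n) 0
    = ∑ lam ∈ Finset.Nat.antidiagonalTuple (2*d) n,
        max
          ((mcoef (fun i => (K : ℤ) - (lam i : ℤ)) : ℝ)
              * (Nat.multinomial Finset.univ lam : ℝ)
              / (Nat.multinomial Finset.univ (fun _ : Fin (2*d) => K) : ℝ)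
            - ((2*d : ℝ))⁻¹ ^ n * (Nat.multinomial Finset.univ lam : ℝ)) 0 := by
  classical
  have hL : 0 < 2*d := by omega
  set u : ℝ := ((2*d : ℝ))⁻¹ ^ n with hudef
  have hu : 0 ≤ u := by positivity
  set label : Fin (2*d*K) → Fin (2*d) :=
    fun c => ⟨((c : ℕ) + 1) % (2*d), Nat.mod_lt _ hL⟩ with hlabel
  have hfib : ∀ i, (univ.filter fun c : Fin (2*d*K) => label c = i).card = K := by
    intro i
    have hfe : (univ.filter fun c : Fin (2*d*K) => label c = i)
        = (univ.filter fun c : Fin ((2*d)*K) => ((c : ℕ) + 1) % (2*d) = (i : ℕ)) := by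
      apply Finset.filter_congr
      intro c _
      simp only [hlabel]
      exact ⟨fun h => by rw [← h], fun h => Fin.ext h⟩
    rw [hfe]
    exact card_label_fiber hL i
  have hcount : ∀ ω : Fin n → Fin (2*d),
      ((Finset.univ.filter (fun σ : Equiv.Perm (Fin (2*d*K)) =>
          ∀ j : Fin n, (((σ (Fin.castLE hn.le j) : ℕ) + 1) % (2*d)) = (ω j : ℕ))).card)
      = Nat.factorial (2*d*K - n) * ∏ i, Nat.descFactorial K (cnt ω i) := by
    intro ω
    rw [← card_perm_label hn.le label ω K hfib]
    congr 1
    apply Finset.filter_congr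
    intro σ _
    refine forall_congr' fun j => ?_
    simp only [hlabel]
    exact ⟨fun h => Fin.ext h, fun h => by rw [← h]⟩
  simp only [hcount]
  rw [← Finset.sum_fiberwise_of_maps_to
    (g := fun ω : Fin n → Fin (2*d) => cnt ω)
    (t := Finset.Nat.antidiagonalTuple (2*d) n)
    (fun ω _ => Finset.Nat.mem_antidiagonalTuple.2 (sum_cnt ω))]
  apply Finset.sum_congr rfl
  intro lam hlam
  have hsum : ∑ i, lam i = n := Finset.Nat.mem_antidiagonalTuple.1 hlam
  have hinner : ∀ ω ∈ univ.filter
      (fun ω : Fin n → Fin (2*d) => (fun ω => cnt ω) ω = lam),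
      max (((Nat.factorial (2*d*K - n) * ∏ i, Nat.descFactorial K (cnt ω i) : ℕ) : ℝ)
          / (Nat.factorial (2*d*K) : ℝ) - u) 0
      = max (((Nat.factorial (2*d*K - n) * ∏ i, Nat.descFactorial K (lam i) : ℕ) : ℝ)
          / (Nat.factorial (2*d*K) : ℝ) - u) 0 := by
    intro ω hω
    have h := (Finset.mem_filter.1 hω).2
    simp only at h
    rw [h]
  rw [Finset.sum_congr rfl hinner, Finset.sum_const, nsmul_eq_mul]
  have hFc : (univ.filter
      (fun ω : Fin n → Fin (2*d) => (fun ω => cnt ω) ω = lam)).card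
      = Nat.multinomial univ lam := Fcard_eq_multinomial hsum
  rw [hFc]
  push_cast [Nat.cast_mul]
  have := key_real (L := 2*d) (K := K) (n := n) u hu lam hsum
  push_cast at this
  rw [this]
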